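/- Let n ≥ 1 and 1 ≤ ω ≤ ϖ be integers with 2ϖ−1 ≤ n, and let ν be a divisor of n with ν ≥ ϖ + ω − 1. Let m ∈ S_ω, and let z ∈ ℝⁿ whose DFT is supported on multiples of ν, i.e. Σ_{j=0}^{n−1} z_j·exp(−2πi·j·k/n) = 0 for every k ∈ {0,…,n−1} not divisible by ν. Then P_ϖ(m ∘ z) = ⟨z⟩·m, where m ∘ z is the componentwise product and ⟨z⟩ = (1/n)·Σ_{j=0}^{n−1} z_j. -/

import Mathlib

open scoped BigOperators

noncomputable section

/-- Low-frequency index set `K_ω ⊆ {0,…,n−1}`. -/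
def Kset (n ω : ℕ) : Set (Fin n) := {k | (k : ℕ) ≤ ω - 1 ∨ n - ω + 1 ≤ (k : ℕ)}

/-- The set of ω-bandlimited real vectors `S_ω`. -/
def Sband (n ω : ℕ) : Set (EuclideanSpace ℝ (Fin n)) :=
  {x | ∀ k : Fin n, k ∉ Kset n ω →
    ∑ j : Fin n, (x j : ℂ) *
      Complex.exp (-(2 * (Real.pi : ℂ) * Complex.I * ((j : ℕ) : ℂ) * ((k : ℕ) : ℂ)) / (n : ℂ)) = 0}

/-- The constraint set `S_{≥|s|}`. -/
def Sgeq (n : ℕ) (s : EuclideanSpace ℝ (Fin n)) : Set (EuclideanSpace ℝ (Fin n)) :=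
  {x | ∀ j, |s j| ≤ x j}

/-- The metric projection onto `S_{≥|s|}`: componentwise `max(z_j, |s_j|)`. -/
def Pgeq (n : ℕ) (s z : EuclideanSpace ℝ (Fin n)) : EuclideanSpace ℝ (Fin n) :=
  (WithLp.equiv 2 (Fin n → ℝ)).symm (fun j => max (z j) |s j|)

/-- The rectangular low-pass filter `P_ϖ` (the orthogonal projection onto `S_ϖ`):
`(P_ϖ z)_j = (1/n)·Σ_{k∈K_ϖ} Σ_{l} z_l·cos(2πk(j−l)/n)`. -/
def Pband (n ϖ : ℕ) (z : EuclideanSpace ℝ (Fin n)) : EuclideanSpace ℝ (Fin n) :=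
  (WithLp.equiv 2 (Fin n → ℝ)).symm (fun j =>
    (1 / (n : ℝ)) *
      ∑ k ∈ Finset.univ.filter (fun k : Fin n => (k : ℕ) ≤ ϖ - 1 ∨ n - ϖ + 1 ≤ (k : ℕ)),
        ∑ l : Fin n, z l * Real.cos (2 * Real.pi * (k : ℕ) * (((j : ℕ) : ℝ) - ((l : ℕ) : ℝ)) / (n : ℝ)))

namespace PbandAux

/-- `ee n t = exp(2πi t / n)`. -/
def ee (n : ℕ) (t : ℤ) : ℂ := Complex.exp (2 * Real.pi * Complex.I * t / n)

lemma ee_add (n : ℕ) (s t : ℤ) : ee n (s + t) = ee n s * ee n t := by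
  rw [ee, ee, ee, ← Complex.exp_add]
  congr 1
  push_cast
  ring

lemma ee_zero (n : ℕ) : ee n 0 = 1 := by simp [ee]

lemma ee_n_mul (n : ℕ) (hn : 1 ≤ n) (s : ℤ) : ee n ((n : ℤ) * s) = 1 := by
  have hn0 : (n : ℂ) ≠ 0 := Nat.cast_ne_zero.mpr (by omega)
  rw [ee]
  have h : 2 * (Real.pi : ℂ) * Complex.I * ((n : ℤ) * s : ℤ) / n
      = (s : ℂ) * (2 * Real.pi * Complex.I) := by
    push_cast
    field_simp
  rw [h, Complex.exp_int_mul_two_pi_mul_I]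

lemma ee_pow (n : ℕ) (j : ℕ) (t : ℤ) : ee n ((j : ℤ) * t) = (ee n t) ^ j := by
  rw [ee, ee, ← Complex.exp_nat_mul]
  congr 1
  push_cast
  ring

lemma ee_ne_one (n : ℕ) (hn : 1 ≤ n) (t : ℤ) (h : ¬ (n : ℤ) ∣ t) : ee n t ≠ 1 := by
  intro hone
  rw [ee, Complex.exp_eq_one_iff] at hone
  obtain ⟨k, hk⟩ := hone
  apply h
  refine ⟨k, ?_⟩
  have hn0 : (n : ℂ) ≠ 0 := Nat.cast_ne_zero.mpr (by omega)
  have hpi : (Real.pi : ℂ) ≠ 0 := by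
    exact_mod_cast Real.pi_ne_zero
  have h2 : (2 * (Real.pi : ℂ) * Complex.I) ≠ 0 := by
    simp [Complex.I_ne_zero, hpi]
  have : (t : ℂ) = ((n : ℤ) * k : ℤ) := by
    field_simp at hk
    have hk' : 2 * (Real.pi : ℂ) * Complex.I * t
        = 2 * (Real.pi : ℂ) * Complex.I * (n * k) := by
      rw [hk]
    have := mul_left_cancel₀ h2 hk'
    push_cast
    rw [this]
  exact_mod_cast this

lemma sum_ee (n : ℕ) (hn : 1 ≤ n) (t : ℤ) :
    ∑ j : Fin n, ee n ((j : ℤ) * t) = if (n : ℤ) ∣ t then (n : ℂ) else 0 := by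
  by_cases h : (n : ℤ) ∣ t
  · obtain ⟨s, rfl⟩ := h
    rw [if_pos ⟨s, rfl⟩]
    have : ∀ j : Fin n, ee n ((j : ℤ) * ((n : ℤ) * s)) = 1 := fun j => by
      rw [show (j : ℤ) * ((n : ℤ) * s) = (n : ℤ) * ((j : ℤ) * s) by ring, ee_n_mul n hn]
    simp [this]
  · rw [if_neg h]
    have hne := ee_ne_one n hn t h
    have hp : ∀ j : Fin n, ee n ((j : ℤ) * t) = (ee n t) ^ (j : ℕ) := fun j => ee_pow n j t
    simp_rw [hp]
    rw [Fin.sum_univ_eq_sum_range (fun j => (ee n t) ^ j) n, geom_sum_eq hne]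
    have hpow : (ee n t) ^ n = 1 := by
      rw [← ee_pow, show ((n : ℕ) : ℤ) * t = (n : ℤ) * t from rfl, ee_n_mul n hn]
    rw [hpow]
    simp

/-- The (unnormalized) DFT of a real vector, at an arbitrary integer frequency. -/
def dft (n : ℕ) (x : Fin n → ℝ) (k : ℤ) : ℂ := ∑ j : Fin n, (x j : ℂ) * ee n (-((j : ℤ) * k))

lemma dft_add_n_mul (n : ℕ) (hn : 1 ≤ n) (x : Fin n → ℝ) (k s : ℤ) :
    dft n x (k + (n : ℤ) * s) = dft n x k := by
  unfold dft
  refine Finset.sum_congr rfl fun j _ => ?_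
  rw [show -((j : ℤ) * (k + (n : ℤ) * s)) = -((j : ℤ) * k) + (n : ℤ) * (-(j * s)) by ring,
    ee_add, ee_n_mul n hn, mul_one]

lemma dft_mod (n : ℕ) (hn : 1 ≤ n) (x : Fin n → ℝ) (k : ℤ) :
    dft n x k = dft n x (k % (n : ℤ)) := by
  conv_lhs => rw [← Int.emod_add_mul_ediv k (n : ℤ)]
  exact dft_add_n_mul n hn x _ _

lemma inv_dft (n : ℕ) (hn : 1 ≤ n) (x : Fin n → ℝ) (j : Fin n) :
    ∑ k : Fin n, ee n ((k : ℤ) * (j : ℤ)) * dft n x k = (n : ℂ) * x j := by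
  unfold dft
  simp_rw [Finset.mul_sum]
  rw [Finset.sum_comm]
  have key : ∀ l k : Fin n,
      ee n ((k : ℤ) * (j : ℤ)) * ((x l : ℂ) * ee n (-((l : ℤ) * k)))
        = (x l : ℂ) * ee n ((k : ℤ) * ((j : ℤ) - l)) := by
    intro l k
    rw [show (k : ℤ) * ((j : ℤ) - l) = (k : ℤ) * (j : ℤ) + -((l : ℤ) * k) by ring, ee_add]
    ring
  simp_rw [key, ← Finset.mul_sum, sum_ee n hn]
  rw [Finset.sum_eq_single j]
  · simp [mul_comm]
  · intro l _ hlj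
    rw [if_neg, mul_zero]
    intro ⟨c, hc⟩
    apply hlj
    have h1 : (l : ℕ) < n := l.isLt
    have h2 : (j : ℕ) < n := j.isLt
    have hb1 : -(n : ℤ) < (j : ℤ) - (l : ℤ) := by omega
    have hb2 : (j : ℤ) - (l : ℤ) < n := by omega
    have h0 : (j : ℤ) - (l : ℤ) = 0 := by
      rcases lt_trichotomy c 0 with h | h | h
      · exfalso; nlinarith [hc]
      · simp [hc, h]
      · exfalso; nlinarith [hc]
    exact Fin.ext (by omega)
  · intro hj
    exact absurd (Finset.mem_univ j) hj

lemma dft_eq_statement (n : ℕ) (x : Fin n → ℝ) (k : Fin n) :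
    dft n x ((k : ℕ) : ℤ) = ∑ j : Fin n, (x j : ℂ) *
      Complex.exp (-(2 * (Real.pi : ℂ) * Complex.I * ((j : ℕ) : ℂ) * ((k : ℕ) : ℂ)) / (n : ℂ)) := by
  unfold dft ee
  refine Finset.sum_congr rfl fun j _ => ?_
  congr 2
  push_cast
  ring

lemma dft_vanish (n ω : ℕ) (hn : 1 ≤ n) (x : EuclideanSpace ℝ (Fin n)) (hx : x ∈ Sband n ω)
    (k : ℤ) (h : ¬((k % (n : ℤ)).toNat ≤ ω - 1 ∨ n - ω + 1 ≤ (k % (n : ℤ)).toNat)) :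
    dft n x k = 0 := by
  have hnz : (n : ℤ) ≠ 0 := by exact_mod_cast (by omega : n ≠ 0)
  have hge : 0 ≤ k % (n : ℤ) := Int.emod_nonneg k hnz
  have hlt : k % (n : ℤ) < n := Int.emod_lt_of_pos k (by exact_mod_cast (by omega : 0 < n))
  have hltn : (k % (n : ℤ)).toNat < n := by omega
  set kf : Fin n := ⟨(k % (n : ℤ)).toNat, hltn⟩ with hkf
  have hmem : kf ∉ Kset n ω := by
    simpa [Kset, hkf] using h
  have h0 := hx kf hmem
  have heq : dft n x k = dft n x ((kf : ℕ) : ℤ) := by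
    rw [dft_mod n hn x k]
    congr 1
    simp [hkf]
    omega
  rw [heq, dft_eq_statement]
  exact h0

end PbandAux

open PbandAux Finset

lemma ee_re (n : ℕ) (t : ℤ) : (ee n t).re = Real.cos (2 * Real.pi * (t : ℝ) / n) := by
  rw [ee, show 2 * (Real.pi : ℂ) * Complex.I * (t : ℂ) / (n : ℂ)
      = ((2 * Real.pi * (t : ℝ) / (n : ℝ) : ℝ) : ℂ) * Complex.I by push_cast; ring,
    Complex.exp_ofReal_mul_I_re]

theorem Pband_of_bandlimited_mul_periodic
    (n ω ϖ ν : ℕ) (hn : 1 ≤ n) (hω : 1 ≤ ω) (hωϖ : ω ≤ ϖ) (h2ϖ : 2 * ϖ - 1 ≤ n)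
    (hν : ν ∣ n) (hνge : ϖ + ω - 1 ≤ ν)
    (m : EuclideanSpace ℝ (Fin n)) (hm : m ∈ Sband n ω)
    (z : EuclideanSpace ℝ (Fin n))
    (hzdft : ∀ k : Fin n, ¬ (ν ∣ (k : ℕ)) →
      ∑ j : Fin n, (z j : ℂ) *
        Complex.exp (-(2 * (Real.pi : ℂ) * Complex.I * ((j : ℕ) : ℂ) * ((k : ℕ) : ℂ)) / (n : ℂ)) = 0) :
    Pband n ϖ ((WithLp.equiv 2 (Fin n → ℝ)).symm (fun j => m j * z j)) =
      ((1 / (n : ℝ)) * ∑ j : Fin n, z j) • m := by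
  have hn0C : (n : ℂ) ≠ 0 := Nat.cast_ne_zero.mpr (by omega)
  have hϖ : 1 ≤ ϖ := le_trans hω hωϖ
  set F : Finset (Fin n) :=
    Finset.univ.filter (fun k : Fin n => (k : ℕ) ≤ ϖ - 1 ∨ n - ϖ + 1 ≤ (k : ℕ)) with hF
  -- z's DFT vanishes off multiples of ν
  have hz : ∀ k : Fin n, ¬ (ν ∣ (k : ℕ)) → dft n z ((k : ℕ) : ℤ) = 0 := fun k hk => by
    rw [dft_eq_statement]; exact hzdft k hk
  -- inversion formula for z, solved for z l
  have hzl : ∀ l : Fin n, (z l : ℂ)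
      = (1 / (n : ℂ)) * ∑ t : Fin n, ee n ((t : ℤ) * (l : ℤ)) * dft n z ((t : ℕ) : ℤ) := by
    intro l
    rw [show (∑ t : Fin n, ee n ((t : ℤ) * (l : ℤ)) * dft n z ((t : ℕ) : ℤ))
        = (n : ℂ) * z l from inv_dft n hn z l]
    field_simp
  -- key vanishing: for k in the pass band and t a nonzero multiple of ν, m̂(k − t) = 0
  have hmt : ∀ (k t : Fin n), ((k : ℕ) ≤ ϖ - 1 ∨ n - ϖ + 1 ≤ (k : ℕ)) → ν ∣ (t : ℕ) →
      (t : ℕ) ≠ 0 → dft n m ((k : ℤ) - ((t : ℕ) : ℤ)) = 0 := by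
    intro k t hk hdvd ht0
    have hνpos : 0 < ν := by
      rcases Nat.eq_zero_or_pos ν with h | h
      · exfalso; apply ht0; simpa [h] using hdvd
      · exact h
    have hνt : ν ≤ (t : ℕ) := Nat.le_of_dvd (by omega) hdvd
    have hνnt : ν ≤ n - (t : ℕ) := Nat.le_of_dvd (by omega) (Nat.dvd_sub hν hdvd)
    have hkn : (k : ℕ) < n := k.isLt
    have htn : (t : ℕ) < n := t.isLt
    have hcond : ¬(((((k : ℕ) : ℤ) - ((t : ℕ) : ℤ)) % ((n : ℕ) : ℤ)).toNat ≤ ω - 1 ∨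
        n - ω + 1 ≤ ((((k : ℕ) : ℤ) - ((t : ℕ) : ℤ)) % ((n : ℕ) : ℤ)).toNat) := by
      by_cases hle : (t : ℕ) ≤ (k : ℕ)
      · have hrval : (((k : ℕ) : ℤ) - ((t : ℕ) : ℤ)) % ((n : ℕ) : ℤ)
            = ((k : ℕ) : ℤ) - ((t : ℕ) : ℤ) := by
          apply Int.emod_eq_of_lt <;> omega
        rw [hrval]
        omega
      · have hrval : (((k : ℕ) : ℤ) - ((t : ℕ) : ℤ)) % ((n : ℕ) : ℤ)
            = ((k : ℕ) : ℤ) - ((t : ℕ) : ℤ) + n := by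
          calc (((k : ℕ) : ℤ) - ((t : ℕ) : ℤ)) % ((n : ℕ) : ℤ)
              = (((k : ℕ) : ℤ) - ((t : ℕ) : ℤ) + ((n : ℕ) : ℤ) * 1) % ((n : ℕ) : ℤ) := by
                rw [Int.add_mul_emod_self_left]
            _ = (((k : ℕ) : ℤ) - ((t : ℕ) : ℤ) + ((n : ℕ) : ℤ)) % ((n : ℕ) : ℤ) := by ring_nf
            _ = ((k : ℕ) : ℤ) - ((t : ℕ) : ℤ) + ((n : ℕ) : ℤ) := by
                apply Int.emod_eq_of_lt <;> omega
        rw [hrval]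
        omega
    exact dft_vanish n ω hn m hm _ hcond
  -- convolution formula
  have conv : ∀ k : ℤ, dft n (fun l => m l * z l) k
      = (1 / (n : ℂ)) * ∑ t : Fin n, dft n z ((t : ℕ) : ℤ) * dft n m (k - ((t : ℕ) : ℤ)) := by
    intro k
    calc dft n (fun l => m l * z l) k
        = ∑ l : Fin n, ∑ t : Fin n, (1 / (n : ℂ)) *
            ((m l : ℂ) * ee n (-((l : ℤ) * k)) * (ee n ((t : ℤ) * (l : ℤ)) * dft n z ((t : ℕ) : ℤ))) := by
          rw [show dft n (fun l => m l * z l) k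
              = ∑ l : Fin n, ((m l * z l : ℝ) : ℂ) * ee n (-((l : ℤ) * k)) from rfl]
          refine Finset.sum_congr rfl fun l _ => ?_
          push_cast
          rw [hzl l]
          simp only [Finset.mul_sum, Finset.sum_mul]
          refine Finset.sum_congr rfl fun t _ => ?_
          ring
      _ = ∑ t : Fin n, ∑ l : Fin n, (1 / (n : ℂ)) *
            ((m l : ℂ) * ee n (-((l : ℤ) * k)) * (ee n ((t : ℤ) * (l : ℤ)) * dft n z ((t : ℕ) : ℤ))) :=
          Finset.sum_comm
      _ = (1 / (n : ℂ)) * ∑ t : Fin n, dft n z ((t : ℕ) : ℤ) * dft n m (k - ((t : ℕ) : ℤ)) := by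
          rw [Finset.mul_sum]
          refine Finset.sum_congr rfl fun t _ => ?_
          rw [show dft n m (k - ((t : ℕ) : ℤ))
              = ∑ l : Fin n, (m l : ℂ) * ee n (-((l : ℤ) * (k - ((t : ℕ) : ℤ)))) from rfl,
            Finset.mul_sum, Finset.mul_sum]
          refine Finset.sum_congr rfl fun l _ => ?_
          rw [show -((l : ℤ) * (k - ((t : ℕ) : ℤ))) = (t : ℤ) * (l : ℤ) + -((l : ℤ) * k) by ring,
            ee_add]
          ring
  -- only t = 0 contributes
  have step3 : ∀ k : Fin n, k ∈ F →
      ∑ t : Fin n, dft n z ((t : ℕ) : ℤ) * dft n m ((k : ℤ) - ((t : ℕ) : ℤ))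
        = (∑ l : Fin n, (z l : ℂ)) * dft n m ((k : ℕ) : ℤ) := by
    intro k hk
    have hkP : (k : ℕ) ≤ ϖ - 1 ∨ n - ϖ + 1 ≤ (k : ℕ) := by
      simpa [hF] using hk
    rw [Finset.sum_eq_single (⟨0, by omega⟩ : Fin n)]
    · simp [dft, ee_zero]
    · intro t _ ht0
      have ht0' : (t : ℕ) ≠ 0 := fun h => ht0 (Fin.ext (by simpa using h))
      by_cases hdvd : ν ∣ (t : ℕ)
      · rw [hmt k t hkP hdvd ht0', mul_zero]
      · rw [hz t hdvd, zero_mul]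
    · intro h
      exact absurd (Finset.mem_univ _) h
  -- summing over the pass band recovers m
  have step4 : ∀ j : Fin n,
      ∑ k ∈ F, ee n ((k : ℤ) * (j : ℤ)) * dft n m ((k : ℕ) : ℤ) = (n : ℂ) * m j := by
    intro j
    rw [← inv_dft n hn m j]
    apply Finset.sum_subset (Finset.subset_univ F)
    intro k _ hkF
    have hkP : ¬((k : ℕ) ≤ ϖ - 1 ∨ n - ϖ + 1 ≤ (k : ℕ)) := by
      simpa [hF] using hkF
    have hkn : (k : ℕ) < n := k.isLt
    have hmk : dft n m ((k : ℕ) : ℤ) = 0 := by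
      apply dft_vanish n ω hn m hm
      have : (((k : ℕ) : ℤ)) % (n : ℤ) = ((k : ℕ) : ℤ) := by
        apply Int.emod_eq_of_lt <;> omega
      rw [this]
      omega
    rw [hmk, mul_zero]
  -- the key complex identity, and conclusion
  ext j
  have key : ∑ k ∈ F, ∑ l : Fin n, ((m l * z l : ℝ) : ℂ) * ee n ((k : ℤ) * ((j : ℤ) - (l : ℤ)))
      = ((∑ l : Fin n, z l : ℝ) : ℂ) * ((m j : ℝ) : ℂ) := by
    calc ∑ k ∈ F, ∑ l : Fin n, ((m l * z l : ℝ) : ℂ) * ee n ((k : ℤ) * ((j : ℤ) - (l : ℤ)))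
        = ∑ k ∈ F, ee n ((k : ℤ) * (j : ℤ)) * dft n (fun l => m l * z l) ((k : ℕ) : ℤ) := by
          refine Finset.sum_congr rfl fun k _ => ?_
          rw [show dft n (fun l => m l * z l) ((k : ℕ) : ℤ)
              = ∑ l : Fin n, ((m l * z l : ℝ) : ℂ) * ee n (-((l : ℤ) * ((k : ℕ) : ℤ))) from rfl,
            Finset.mul_sum]
          refine Finset.sum_congr rfl fun l _ => ?_
          rw [show (k : ℤ) * ((j : ℤ) - (l : ℤ)) = (k : ℤ) * (j : ℤ) + -((l : ℤ) * (k : ℤ)) by ring,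
            ee_add]
          ring
      _ = ∑ k ∈ F, ee n ((k : ℤ) * (j : ℤ)) *
            ((1 / (n : ℂ)) * ((∑ l : Fin n, (z l : ℂ)) * dft n m ((k : ℕ) : ℤ))) := by
          refine Finset.sum_congr rfl fun k hk => ?_
          rw [conv ((k : ℕ) : ℤ), step3 k hk]
      _ = (1 / (n : ℂ)) * (∑ l : Fin n, (z l : ℂ)) *
            ∑ k ∈ F, ee n ((k : ℤ) * (j : ℤ)) * dft n m ((k : ℕ) : ℤ) := by
          rw [Finset.mul_sum]
          refine Finset.sum_congr rfl fun k _ => ?_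
          ring
      _ = (1 / (n : ℂ)) * (∑ l : Fin n, (z l : ℂ)) * ((n : ℂ) * m j) := by rw [step4 j]
      _ = ((∑ l : Fin n, z l : ℝ) : ℂ) * ((m j : ℝ) : ℂ) := by
          push_cast
          field_simp
  have hcos : ∀ (k l : Fin n),
      (m l * z l) * Real.cos (2 * Real.pi * ((k : ℕ) : ℝ) * (((j : ℕ) : ℝ) - ((l : ℕ) : ℝ)) / (n : ℝ))
        = (((m l * z l : ℝ) : ℂ) * ee n ((k : ℤ) * ((j : ℤ) - (l : ℤ)))).re := by
    intro k l
    rw [Complex.re_ofReal_mul, ee_re]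
    congr 2
    push_cast
    ring
  show (1 / (n : ℝ)) * (∑ k ∈ F, ∑ l : Fin n,
      (m l * z l) * Real.cos (2 * Real.pi * ((k : ℕ) : ℝ) * (((j : ℕ) : ℝ) - ((l : ℕ) : ℝ)) / (n : ℝ)))
      = ((1 / (n : ℝ)) * ∑ l : Fin n, z l) * m j
  simp_rw [hcos]
  simp_rw [← Complex.re_sum]
  rw [key, ← Complex.ofReal_mul, Complex.ofReal_re]
  ring
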